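/- Let q ≥ 1 be a natural number and let g_c, G_cp : ℝ → ℝ → ℝ be kernels, each continuous on the triangular domain D_T := {(t,τ) : 0 ≤ t ≤ T, 0 ≤ τ ≤ t} for every T > 0, satisfying G_cp(t,τ) ≥ g_c(t,τ) ≥ 0 for all 0 ≤ τ ≤ t. Assume there exists M ≥ 0 such that for all t ≥ 0, ∫₀ᵗ ( ∫_σ^t G_cp(t,τ)·(τ−σ)^(q−1)/(q−1)! dτ ) dσ ≤ M. Then there exists M' ≥ 0 such that for all t ≥ 0, ∫₀ᵗ g_c(t,τ)·τ^q dτ ≤ M'. (Paper's Lemma 5(a).) -/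

import Mathlib

open intervalIntegral Set

open MeasureTheory in
lemma triangle_swap (f : ℝ → ℝ) (hf : Continuous f) (n : ℕ) {t : ℝ} (ht : 0 ≤ t) :
    (∫ σ in (0:ℝ)..t, ∫ τ in σ..t, f τ * (τ - σ) ^ n)
      = ∫ τ in (0:ℝ)..t, f τ * τ ^ (n + 1) / (n + 1) := by
  set μ := volume.restrict (Ioc (0:ℝ) t) with hμ
  set F : ℝ × ℝ → ℝ := fun p => if p.1 ≤ p.2 then f p.2 * (p.2 - p.1) ^ n else 0 with hF
  have hcont : Continuous fun p : ℝ × ℝ => f p.2 * (p.2 - p.1) ^ n :=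
    (hf.comp continuous_snd).mul ((continuous_snd.sub continuous_fst).pow n)
  have hFmeas : Measurable F :=
    Measurable.ite (measurableSet_le measurable_fst measurable_snd) hcont.measurable
      measurable_const
  have hprod : μ.prod μ = volume.restrict ((Ioc (0:ℝ) t) ×ˢ (Ioc (0:ℝ) t)) := by
    rw [hμ, Measure.prod_restrict, ← Measure.volume_eq_prod]
  have habs : IntegrableOn (fun p : ℝ × ℝ => |f p.2 * (p.2 - p.1) ^ n|)
      ((Ioc (0:ℝ) t) ×ˢ (Ioc (0:ℝ) t)) := by
    refine (IntegrableOn.mono_set ?_ (prod_mono Ioc_subset_Icc_self Ioc_subset_Icc_self))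
    exact (hcont.abs.continuousOn).integrableOn_compact (isCompact_Icc.prod isCompact_Icc)
  have hFint : Integrable F (μ.prod μ) := by
    rw [hprod]
    refine Integrable.mono' habs hFmeas.aestronglyMeasurable.restrict ?_
    filter_upwards with p
    rw [hF]
    dsimp only
    split_ifs with h
    · simp [Real.norm_eq_abs, abs_mul, abs_pow]
    · simp [abs_nonneg]
      positivity
  have hswap : (∫ σ, (∫ τ, F (σ, τ) ∂μ) ∂μ) = ∫ τ, (∫ σ, F (σ, τ) ∂μ) ∂μ :=
    integral_integral_swap hFint
  have hL : (∫ σ in (0:ℝ)..t, ∫ τ in σ..t, f τ * (τ - σ) ^ n)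
      = ∫ σ, (∫ τ, F (σ, τ) ∂μ) ∂μ := by
    rw [intervalIntegral.integral_of_le ht, hμ]
    refine setIntegral_congr_fun measurableSet_Ioc fun σ hσ => ?_
    have h1 : ∀ τ : ℝ, F (σ, τ) = Set.indicator (Ici σ) (fun τ => f τ * (τ - σ) ^ n) τ := by
      intro τ; simp [hF, Set.indicator_apply, Set.mem_Ici]
    calc (∫ τ in σ..t, f τ * (τ - σ) ^ n)
        = ∫ τ in Ioc σ t, f τ * (τ - σ) ^ n := intervalIntegral.integral_of_le hσ.2
      _ = ∫ τ in Icc σ t, f τ * (τ - σ) ^ n := integral_Icc_eq_integral_Ioc.symm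
      _ = ∫ τ in Ioc 0 t ∩ Ici σ, f τ * (τ - σ) ^ n := by
          have hset : Icc σ t = Ioc 0 t ∩ Ici σ := by
            ext τ
            simp only [Set.mem_Icc, Set.mem_inter_iff, Set.mem_Ioc, Set.mem_Ici]
            constructor
            · rintro ⟨h1, h2⟩; exact ⟨⟨lt_of_lt_of_le hσ.1 h1, h2⟩, h1⟩
            · rintro ⟨⟨_, h2⟩, h3⟩; exact ⟨h3, h2⟩
          rw [hset]
      _ = ∫ τ in Ioc 0 t, Set.indicator (Ici σ) (fun τ => f τ * (τ - σ) ^ n) τ := by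
          rw [setIntegral_indicator measurableSet_Ici]
      _ = ∫ τ, F (σ, τ) ∂μ := by
          rw [hμ]
          exact setIntegral_congr_fun measurableSet_Ioc fun τ _ => (h1 τ).symm
  have hR : (∫ τ, (∫ σ, F (σ, τ) ∂μ) ∂μ) = ∫ τ in (0:ℝ)..t, f τ * τ ^ (n + 1) / (n + 1) := by
    rw [intervalIntegral.integral_of_le ht, hμ]
    refine setIntegral_congr_fun measurableSet_Ioc fun τ hτ => ?_
    have h1 : ∀ σ : ℝ, F (σ, τ) = Set.indicator (Iic τ) (fun σ => f τ * (τ - σ) ^ n) σ := by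
      intro σ; simp [hF, Set.indicator_apply, Set.mem_Iic]
    calc (∫ σ, F (σ, τ) ∂μ)
        = ∫ σ in Ioc 0 t, Set.indicator (Iic τ) (fun σ => f τ * (τ - σ) ^ n) σ := by
          rw [hμ]; exact setIntegral_congr_fun measurableSet_Ioc fun σ _ => h1 σ
      _ = ∫ σ in Ioc 0 t ∩ Iic τ, f τ * (τ - σ) ^ n := by
          rw [setIntegral_indicator measurableSet_Iic]
      _ = ∫ σ in Ioc 0 τ, f τ * (τ - σ) ^ n := by
          rw [Set.Ioc_inter_Iic, min_eq_right hτ.2]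
      _ = ∫ σ in (0:ℝ)..τ, f τ * (τ - σ) ^ n := (intervalIntegral.integral_of_le hτ.1.le).symm
      _ = f τ * ∫ σ in (0:ℝ)..τ, (τ - σ) ^ n := intervalIntegral.integral_const_mul _ _
      _ = f τ * (τ ^ (n + 1) / (n + 1)) := by
          rw [intervalIntegral.integral_comp_sub_left (fun x => x ^ n) τ]
          simp [integral_pow]
      _ = f τ * τ ^ (n + 1) / (n + 1) := (mul_div_assoc _ _ _).symm
  rw [hL, hswap, hR]

/-- A kernel `g : ℝ → ℝ → ℝ` is continuous on the triangular domain
`D_T = {(t,τ) : 0 ≤ t ≤ T, 0 ≤ τ ≤ t}` for every `T > 0`. -/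
def ContinuousOnTriangles (g : ℝ → ℝ → ℝ) : Prop :=
  ∀ T : ℝ, 0 < T →
    ContinuousOn (fun p : ℝ × ℝ => g p.1 p.2)
      {p : ℝ × ℝ | 0 ≤ p.1 ∧ p.1 ≤ T ∧ 0 ≤ p.2 ∧ p.2 ≤ p.1}

/-- **Paper's Lemma 5(a).** If `0 ≤ g_c ≤ G_cp` on the triangle and the iterated integral
`∫₀ᵗ ∫_σ^t G_cp(t,τ) (τ-σ)^(q-1)/(q-1)! dτ dσ` is uniformly bounded, then the moment
integral `∫₀ᵗ g_c(t,τ) τ^q dτ` is uniformly bounded. -/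
theorem moment_integral_bounded
    (q : ℕ) (hq : 1 ≤ q)
    (g_c G_cp : ℝ → ℝ → ℝ)
    (hgc_cont : ContinuousOnTriangles g_c)
    (hGcp_cont : ContinuousOnTriangles G_cp)
    (hnonneg : ∀ t τ : ℝ, 0 ≤ τ → τ ≤ t → 0 ≤ g_c t τ)
    (hdom : ∀ t τ : ℝ, 0 ≤ τ → τ ≤ t → g_c t τ ≤ G_cp t τ)
    (M : ℝ) (hM : 0 ≤ M)
    (hbound : ∀ t : ℝ, 0 ≤ t →
      (∫ σ in (0:ℝ)..t, ∫ τ in σ..t,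
        G_cp t τ * (τ - σ) ^ (q - 1) / (Nat.factorial (q - 1) : ℝ)) ≤ M) :
    ∃ M' : ℝ, 0 ≤ M' ∧ ∀ t : ℝ, 0 ≤ t →
      (∫ τ in (0:ℝ)..t, g_c t τ * τ ^ q) ≤ M' := by
  refine ⟨(q.factorial : ℝ) * M, by positivity, fun t ht => ?_⟩
  rcases eq_or_lt_of_le ht with h0 | h0
  · rw [← h0]
    simp only [intervalIntegral.integral_same]
    positivity
  set n := q - 1 with hn
  have hqn : n + 1 = q := Nat.succ_pred_eq_of_pos hq
  -- clamp
  set c : ℝ → ℝ := fun τ => max 0 (min τ t) with hc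
  have hccont : Continuous c := continuous_const.max (continuous_id.min continuous_const)
  have hc0 : ∀ τ, 0 ≤ c τ := fun τ => le_max_left _ _
  have hct : ∀ τ, c τ ≤ t := fun τ => max_le h0.le (min_le_right _ _)
  have hceq : ∀ τ ∈ Icc (0:ℝ) t, c τ = τ := by
    intro τ hτ
    rw [hc]
    simp only [min_eq_left hτ.2, max_eq_right hτ.1]
  have hmem : ∀ τ : ℝ, ((t, c τ) : ℝ × ℝ) ∈
      {p : ℝ × ℝ | 0 ≤ p.1 ∧ p.1 ≤ t ∧ 0 ≤ p.2 ∧ p.2 ≤ p.1} :=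
    fun τ => ⟨ht, le_refl t, hc0 τ, hct τ⟩
  set f' : ℝ → ℝ := fun τ => g_c t (c τ) with hf'def
  set G' : ℝ → ℝ := fun τ => G_cp t (c τ) with hG'def
  have hf' : Continuous f' :=
    (hgc_cont t h0).comp_continuous (continuous_const.prodMk hccont) hmem
  have hG' : Continuous G' :=
    (hGcp_cont t h0).comp_continuous (continuous_const.prodMk hccont) hmem
  have hfac : (0:ℝ) < (n.factorial : ℝ) := by exact_mod_cast n.factorial_pos
  -- step 1: rewrite hbound's double integral using G'
  have hb1 : (∫ σ in (0:ℝ)..t, ∫ τ in σ..t, G' τ * (τ - σ) ^ n) / (n.factorial : ℝ) ≤ M := by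
    have e1 : (∫ σ in (0:ℝ)..t, ∫ τ in σ..t,
        G_cp t τ * (τ - σ) ^ (q-1) / (Nat.factorial (q-1) : ℝ))
        = (∫ σ in (0:ℝ)..t, ∫ τ in σ..t, G' τ * (τ - σ) ^ n) / (n.factorial : ℝ) := by
      rw [← intervalIntegral.integral_div]
      apply intervalIntegral.integral_congr
      intro σ hσ
      rw [Set.uIcc_of_le ht] at hσ
      dsimp only
      rw [← intervalIntegral.integral_div]
      apply intervalIntegral.integral_congr
      intro τ hτ
      rw [Set.uIcc_of_le hσ.2] at hτ
      dsimp only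
      have : c τ = τ := hceq τ ⟨le_trans hσ.1 hτ.1, hτ.2⟩
      simp only [hG'def, this, hn]
    rw [← e1]
    exact hbound t ht
  have hbG : (∫ σ in (0:ℝ)..t, ∫ τ in σ..t, G' τ * (τ - σ) ^ n) ≤ (n.factorial : ℝ) * M := by
    rw [div_le_iff₀ hfac] at hb1
    linarith [hb1]
  -- step 2: Fubini for G' and f'
  have hkeyG := triangle_swap G' hG' n ht
  -- step 3: main chain
  have hmono : (∫ τ in (0:ℝ)..t, f' τ * τ ^ (n+1) / (n+1))
      ≤ ∫ τ in (0:ℝ)..t, G' τ * τ ^ (n+1) / (n+1) := by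
    apply intervalIntegral.integral_mono_on ht
    · exact ((hf'.mul (continuous_pow _)).div_const _).intervalIntegrable _ _
    · exact ((hG'.mul (continuous_pow _)).div_const _).intervalIntegrable _ _
    · intro τ hτ
      have h1 : f' τ ≤ G' τ := hdom t (c τ) (hc0 τ) (hct τ)
      have hτ0 : (0:ℝ) ≤ τ := hτ.1
      have hden : (0:ℝ) < (n:ℝ) + 1 := by positivity
      gcongr
  have e2 : (∫ τ in (0:ℝ)..t, g_c t τ * τ ^ q) = ∫ τ in (0:ℝ)..t, f' τ * τ ^ q := by
    apply intervalIntegral.integral_congr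
    intro τ hτ
    rw [Set.uIcc_of_le ht] at hτ
    simp only [hf'def, hceq τ hτ]
  have e3 : (∫ τ in (0:ℝ)..t, f' τ * τ ^ q)
      = ((n:ℝ) + 1) * ∫ τ in (0:ℝ)..t, f' τ * τ ^ (n + 1) / ((n:ℝ) + 1) := by
    rw [← intervalIntegral.integral_const_mul]
    apply intervalIntegral.integral_congr
    intro τ _
    dsimp only
    rw [← hqn]
    field_simp
  calc (∫ τ in (0:ℝ)..t, g_c t τ * τ ^ q)
      = ((n:ℝ) + 1) * ∫ τ in (0:ℝ)..t, f' τ * τ ^ (n + 1) / ((n:ℝ) + 1) := by rw [e2, e3]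
    _ ≤ ((n:ℝ) + 1) * ∫ τ in (0:ℝ)..t, G' τ * τ ^ (n + 1) / ((n:ℝ) + 1) :=
        mul_le_mul_of_nonneg_left hmono (by positivity)
    _ = ((n:ℝ) + 1) * (∫ σ in (0:ℝ)..t, ∫ τ in σ..t, G' τ * (τ - σ) ^ n) := by rw [hkeyG]
    _ ≤ ((n:ℝ) + 1) * ((n.factorial : ℝ) * M) :=
        mul_le_mul_of_nonneg_left hbG (by positivity)
    _ = (q.factorial : ℝ) * M := by
        rw [← hqn, Nat.factorial_succ]
        push_cast
        ring
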